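/- arXiv:math/0403280 — 2 statements merged into one kernel-verified Lean document; each statement's English description precedes it below -/
import Mathlib

section
/- Let A = Σ{A_{ij} | i,j ∈ I} be the generalized matrix ring of a Γ_I-system. Then the Baer radical of the ring A, the radical g.m.r_b(A), and the upper radical \bar r_b(A) all coincide and are equal, componentwise, to the direct sum Σ{r_b(A_{ij}) | i,j ∈ I}; in particular, an element x = (x_{ij}) of A lies in the Baer radical r_b(A) of the ring A if and only if x_{ij} ∈ r_b(A_{ij}) for all i,j ∈ I. -/
/-!
Generalized matrix rings (g.m.rings) of a `Γ_I`-system, their g.m.ideals,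
g.m.homomorphisms, quotients, and the general theory of radicals,
following Zhang, "The Baer radical of generalized matrix rings".
-/

universe u v w

set_option autoImplicit false
set_option maxHeartbeats 1000000

/-- A `Γ_I`-system: a family of additive abelian groups `A i j` (`i j : I`)
with multiplications `A i j × A j k → A i k`, additive in each variable and
associative. -/
structure GammaSystem (I : Type u) where
  A : I → I → Type v
  [inst : ∀ i j, AddCommGroup (A i j)]
  mul : ∀ {i j k : I}, A i j → A j k → A i k
  add_mul : ∀ {i j k : I} (x y : A i j) (z : A j k), mul (x + y) z = mul x z + mul y z
  mul_add : ∀ {i j k : I} (w : A i j) (x y : A j k), mul w (x + y) = mul w x + mul w y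
  mul_assoc : ∀ {l i j k : I} (w : A l i) (x : A i j) (z : A j k),
    mul w (mul x z) = mul (mul w x) z

attribute [instance] GammaSystem.inst

variable {I : Type u}

/-- The generalized matrix ring `A = Σ{A_{ij} | i,j ∈ I}` of a `Γ_I`-system:
the external direct sum `⨁_{(i,j)} A i j` (finitely supported families). -/
abbrev GMRing (S : GammaSystem I) : Type (max u v) := Π₀ p : I × I, S.A p.1 p.2

namespace GammaSystem

variable (S : GammaSystem I)

lemma zero_mul' {i j k : I} (z : S.A j k) : S.mul (0 : S.A i j) z = 0 := by
  have h := S.add_mul (0 : S.A i j) 0 z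
  rw [add_zero] at h
  exact (add_eq_left.mp h.symm)

lemma mul_zero' {i j k : I} (w : S.A i j) : S.mul w (0 : S.A j k) = 0 := by
  have h := S.mul_add w (0 : S.A j k) 0
  rw [add_zero] at h
  exact (add_eq_left.mp h.symm)

lemma neg_mul' {i j k : I} (x : S.A i j) (z : S.A j k) :
    S.mul (-x) z = -(S.mul x z) := by
  have h := S.add_mul x (-x) z
  rw [add_neg_cancel, S.zero_mul'] at h
  exact (neg_eq_of_add_eq_zero_right h.symm).symm

lemma mul_neg' {i j k : I} (w : S.A i j) (x : S.A j k) :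
    S.mul w (-x) = -(S.mul w x) := by
  have h := S.mul_add w x (-x)
  rw [add_neg_cancel, S.mul_zero'] at h
  exact (neg_eq_of_add_eq_zero_right h.symm).symm

-- Multiplication of generalized matrices: `(x*y)_{ij} = ∑_k x_{ik} y_{kj}`.
open Classical in
noncomputable def gmul (x y : GMRing S) : GMRing S :=
  x.sum fun p a => y.sum fun q b =>
    if h : p.2 = q.1 then
      DFinsupp.single (p.1, q.2)
        (S.mul a (cast (congrArg (fun t => S.A t q.2) h.symm) b))
    else 0

open Classical in
lemma gmul_inner_zero (p : I × I) (a : S.A p.1 p.2) (q : I × I) :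
    (if h : p.2 = q.1 then
      DFinsupp.single (p.1, q.2)
        (S.mul a (cast (congrArg (fun t => S.A t q.2) h.symm) (0 : S.A q.1 q.2)))
    else (0 : GMRing S)) = (0 : GMRing S) := by
  obtain ⟨p1, p2⟩ := p
  obtain ⟨q1, q2⟩ := q
  by_cases h : p2 = q1
  · subst h
    simp [S.mul_zero']
  · simp [h]

open Classical in
lemma gmul_inner_add (p : I × I) (a : S.A p.1 p.2) (q : I × I) (b₁ b₂ : S.A q.1 q.2) :
    (if h : p.2 = q.1 then
      DFinsupp.single (p.1, q.2)
        (S.mul a (cast (congrArg (fun t => S.A t q.2) h.symm) (b₁ + b₂)))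
    else (0 : GMRing S)) =
    (if h : p.2 = q.1 then
      DFinsupp.single (p.1, q.2)
        (S.mul a (cast (congrArg (fun t => S.A t q.2) h.symm) b₁))
    else (0 : GMRing S)) +
    (if h : p.2 = q.1 then
      DFinsupp.single (p.1, q.2)
        (S.mul a (cast (congrArg (fun t => S.A t q.2) h.symm) b₂))
    else (0 : GMRing S)) := by
  obtain ⟨p1, p2⟩ := p
  obtain ⟨q1, q2⟩ := q
  by_cases h : p2 = q1
  · subst h
    simp [S.mul_add, DFinsupp.single_add]
  · simp [h]

open Classical in
lemma gmul_add (x y z : GMRing S) : S.gmul x (y + z) = S.gmul x y + S.gmul x z := by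
  unfold gmul
  have : ∀ (p : I × I) (a : S.A p.1 p.2),
      (y + z).sum (fun q b =>
        if h : p.2 = q.1 then
          DFinsupp.single (p.1, q.2)
            (S.mul a (cast (congrArg (fun t => S.A t q.2) h.symm) b))
        else (0 : GMRing S)) =
      y.sum (fun q b =>
        if h : p.2 = q.1 then
          DFinsupp.single (p.1, q.2)
            (S.mul a (cast (congrArg (fun t => S.A t q.2) h.symm) b))
        else (0 : GMRing S)) +
      z.sum (fun q b =>
        if h : p.2 = q.1 then
          DFinsupp.single (p.1, q.2)
            (S.mul a (cast (congrArg (fun t => S.A t q.2) h.symm) b))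
        else (0 : GMRing S)) := by
    intro p a
    exact DFinsupp.sum_add_index (fun q => S.gmul_inner_zero p a q)
      (fun q b₁ b₂ => S.gmul_inner_add p a q b₁ b₂)
  calc x.sum (fun p a => (y + z).sum fun q b =>
        if h : p.2 = q.1 then
          DFinsupp.single (p.1, q.2)
            (S.mul a (cast (congrArg (fun t => S.A t q.2) h.symm) b))
        else (0 : GMRing S))
      = x.sum (fun p a =>
          (y.sum fun q b =>
            if h : p.2 = q.1 then
              DFinsupp.single (p.1, q.2)
                (S.mul a (cast (congrArg (fun t => S.A t q.2) h.symm) b))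
            else (0 : GMRing S)) +
          (z.sum fun q b =>
            if h : p.2 = q.1 then
              DFinsupp.single (p.1, q.2)
                (S.mul a (cast (congrArg (fun t => S.A t q.2) h.symm) b))
            else (0 : GMRing S))) := by
        exact congrArg (DFinsupp.sum x) (funext fun p => funext fun a => this p a)
    _ = _ := DFinsupp.sum_add

open Classical in
lemma add_gmul (x y z : GMRing S) : S.gmul (x + y) z = S.gmul x z + S.gmul y z := by
  unfold gmul
  refine DFinsupp.sum_add_index (fun p => ?_) (fun p a₁ a₂ => ?_)
  · have : (fun (q : I × I) (b : S.A q.1 q.2) =>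
        (if h : p.2 = q.1 then
          DFinsupp.single (p.1, q.2)
            (S.mul (0 : S.A p.1 p.2) (cast (congrArg (fun t => S.A t q.2) h.symm) b))
        else (0 : GMRing S))) = fun q b => (0 : GMRing S) := by
      funext q b
      obtain ⟨p1, p2⟩ := p
      obtain ⟨q1, q2⟩ := q
      by_cases h : p2 = q1
      · subst h; simp [S.zero_mul']
      · simp [h]
    rw [congrArg (DFinsupp.sum z) this, DFinsupp.sum_zero]
  · have : (fun (q : I × I) (b : S.A q.1 q.2) =>
        (if h : p.2 = q.1 then
          DFinsupp.single (p.1, q.2)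
            (S.mul (a₁ + a₂) (cast (congrArg (fun t => S.A t q.2) h.symm) b))
        else (0 : GMRing S))) = fun q b =>
        (if h : p.2 = q.1 then
          DFinsupp.single (p.1, q.2)
            (S.mul a₁ (cast (congrArg (fun t => S.A t q.2) h.symm) b))
        else (0 : GMRing S)) +
        (if h : p.2 = q.1 then
          DFinsupp.single (p.1, q.2)
            (S.mul a₂ (cast (congrArg (fun t => S.A t q.2) h.symm) b))
        else (0 : GMRing S)) := by
      funext q b
      obtain ⟨p1, p2⟩ := p
      obtain ⟨q1, q2⟩ := q
      by_cases h : p2 = q1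
      · subst h; simp [S.add_mul, DFinsupp.single_add]
      · simp [h]
    rw [congrArg (DFinsupp.sum z) this, DFinsupp.sum_add]

open Classical in
lemma zero_gmul (y : GMRing S) : S.gmul 0 y = 0 := by
  unfold gmul
  exact DFinsupp.sum_zero_index

open Classical in
lemma gmul_zero (x : GMRing S) : S.gmul x 0 = 0 := by
  unfold gmul
  have : (fun (p : I × I) (a : S.A p.1 p.2) =>
      DFinsupp.sum (0 : GMRing S) (fun q b =>
        if h : p.2 = q.1 then
          DFinsupp.single (p.1, q.2)
            (S.mul a (cast (congrArg (fun t => S.A t q.2) h.symm) b))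
        else (0 : GMRing S))) = fun p a => (0 : GMRing S) := by
    funext p a
    exact DFinsupp.sum_zero_index
  rw [congrArg (DFinsupp.sum x) this, DFinsupp.sum_zero]

open Classical in
lemma gmul_single (p : I × I) (a : S.A p.1 p.2) (y : GMRing S) :
    S.gmul (DFinsupp.single p a) y =
      y.sum fun q b =>
        if h : p.2 = q.1 then
          DFinsupp.single (p.1, q.2)
            (S.mul a (cast (congrArg (fun t => S.A t q.2) h.symm) b))
        else 0 := by
  unfold gmul
  refine DFinsupp.sum_single_index ?_
  have : (fun (q : I × I) (b : S.A q.1 q.2) =>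
      (if h : p.2 = q.1 then
        DFinsupp.single (p.1, q.2)
          (S.mul (0 : S.A p.1 p.2) (cast (congrArg (fun t => S.A t q.2) h.symm) b))
      else (0 : GMRing S))) = fun q b => (0 : GMRing S) := by
    funext q b
    obtain ⟨p1, p2⟩ := p; obtain ⟨q1, q2⟩ := q
    by_cases h : p2 = q1
    · subst h; simp [S.zero_mul']
    · simp [h]
  rw [congrArg (DFinsupp.sum y) this, DFinsupp.sum_zero]

open Classical in
lemma gmul_single_single (p q : I × I) (a : S.A p.1 p.2) (b : S.A q.1 q.2) :
    S.gmul (DFinsupp.single p a) (DFinsupp.single q b) =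
      if h : p.2 = q.1 then
        DFinsupp.single (p.1, q.2)
          (S.mul a (cast (congrArg (fun t => S.A t q.2) h.symm) b))
      else 0 := by
  rw [S.gmul_single]
  exact DFinsupp.sum_single_index (S.gmul_inner_zero p a q)

open Classical in
lemma gmul_single_assoc (p q r : I × I) (a : S.A p.1 p.2) (b : S.A q.1 q.2)
    (c : S.A r.1 r.2) :
    S.gmul (S.gmul (DFinsupp.single p a) (DFinsupp.single q b)) (DFinsupp.single r c) =
    S.gmul (DFinsupp.single p a) (S.gmul (DFinsupp.single q b) (DFinsupp.single r c)) := by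
  obtain ⟨p1, p2⟩ := p; obtain ⟨q1, q2⟩ := q; obtain ⟨r1, r2⟩ := r
  by_cases h1 : p2 = q1
  · subst h1
    by_cases h2 : q2 = r1
    · subst h2
      rw [S.gmul_single_single (p1, p2) (p2, q2) a b, dif_pos rfl,
        S.gmul_single_single (p2, q2) (q2, r2) b c, dif_pos rfl,
        S.gmul_single_single (p1, q2) (q2, r2) _ c, dif_pos rfl,
        S.gmul_single_single (p1, p2) (p2, r2) a _, dif_pos rfl]
      show DFinsupp.single (p1, r2) _ = DFinsupp.single (p1, r2) _
      rw [show (cast (congrArg (fun t => S.A t q2) (Eq.symm rfl)) b) = b from rfl,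
        show (cast (congrArg (fun t => S.A t r2) (Eq.symm rfl)) c) = c from rfl]
      exact congrArg _ (S.mul_assoc a b c).symm
    · rw [S.gmul_single_single (p1, p2) (p2, q2) a b, dif_pos rfl,
        S.gmul_single_single (p2, q2) (r1, r2) b c, dif_neg h2,
        S.gmul_single_single (p1, q2) (r1, r2) _ c, dif_neg h2, S.gmul_zero]
  · by_cases h2 : q2 = r1
    · subst h2
      rw [S.gmul_single_single (p1, p2) (q1, q2) a b, dif_neg h1,
        S.gmul_single_single (q1, q2) (q2, r2) b c, dif_pos rfl,
        S.gmul_single_single (p1, p2) (q1, r2) a _, dif_neg h1, S.zero_gmul]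
    · rw [S.gmul_single_single (p1, p2) (q1, q2) a b, dif_neg h1,
        S.gmul_single_single (q1, q2) (r1, r2) b c, dif_neg h2,
        S.zero_gmul, S.gmul_zero]

open Classical in
lemma gmul_single_single_assoc' (p q : I × I) (a : S.A p.1 p.2) (b : S.A q.1 q.2)
    (z : GMRing S) :
    S.gmul (S.gmul (DFinsupp.single p a) (DFinsupp.single q b)) z =
    S.gmul (DFinsupp.single p a) (S.gmul (DFinsupp.single q b) z) := by
  induction z using DFinsupp.induction with
  | h0 => simp only [S.gmul_zero, S.zero_gmul]
  | ha r c f hf hc ih =>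
      rw [S.gmul_add, S.gmul_add, S.gmul_add, ih, S.gmul_single_assoc]

open Classical in
lemma gmul_single_assoc'' (p : I × I) (a : S.A p.1 p.2) (y z : GMRing S) :
    S.gmul (S.gmul (DFinsupp.single p a) y) z =
    S.gmul (DFinsupp.single p a) (S.gmul y z) := by
  induction y using DFinsupp.induction with
  | h0 => simp only [S.gmul_zero, S.zero_gmul]
  | ha q b f hf hb ih =>
      rw [S.gmul_add, S.add_gmul, S.add_gmul, S.gmul_add, ih,
        S.gmul_single_single_assoc']

open Classical in
lemma gmul_assoc (x y z : GMRing S) :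
    S.gmul (S.gmul x y) z = S.gmul x (S.gmul y z) := by
  induction x using DFinsupp.induction with
  | h0 => simp only [S.gmul_zero, S.zero_gmul]
  | ha p a f hf ha ih =>
      rw [S.add_gmul, S.add_gmul, S.add_gmul, ih, S.gmul_single_assoc'']

noncomputable instance : NonUnitalNonAssocRing (GMRing S) :=
  { (inferInstance : AddCommGroup (GMRing S)) with
    mul := S.gmul
    left_distrib := S.gmul_add
    right_distrib := fun x y z => S.add_gmul x y z
    zero_mul := S.zero_gmul
    mul_zero := S.gmul_zero }

/-- The generalized matrix ring is a (possibly non-unital) associative ring. -/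
noncomputable instance : NonUnitalRing (GMRing S) :=
  { (inferInstance : NonUnitalNonAssocRing (GMRing S)) with
    mul_assoc := S.gmul_assoc }

/-- A `Γ_I`-system (g.m.ring) is zero if all its components are zero. -/
def IsZero : Prop := ∀ (i j : I) (x : S.A i j), x = 0

/-- `x ∈ A_{ij}` is `m`-nilpotent in the `A_{ji}`-ring `A_{ij}`: every
`m`-sequence `a_{n+1} = a_n u_n a_n` (`u_n ∈ A_{ji}`) with `a_1 = x`
satisfies `a_k = 0` for some `k`. -/
def MNilpotent (i j : I) (x : S.A i j) : Prop :=
  ∀ a : ℕ → S.A i j, a 0 = x →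
    (∀ n, ∃ u : S.A j i, a (n + 1) = S.mul (S.mul (a n) u) (a n)) →
    ∃ k, a k = 0

/-- The Baer radical `r_b(A_{ij})` of the `A_{ji}`-ring `A_{ij}`: the set of
its `m`-nilpotent elements. -/
def componentBaer (i j : I) : Set (S.A i j) := { x | S.MNilpotent i j x }

end GammaSystem

section RingNotions

variable (R : Type w) [NonUnitalRing R]

/-- A two-sided ideal `P` of a (possibly non-unital) ring is prime if
`BC ⊆ P` implies `B ⊆ P` or `C ⊆ P`. -/
def TwoSidedIdeal.IsPrimeIdeal {R : Type w} [NonUnitalRing R]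
    (P : TwoSidedIdeal R) : Prop :=
  ∀ B C : TwoSidedIdeal R, (∀ b ∈ B, ∀ c ∈ C, b * c ∈ P) → B ≤ P ∨ C ≤ P

/-- The Baer radical of a (possibly non-unital) ring: the intersection of all
prime two-sided ideals. -/
def baerRadical : Set R := { x | ∀ P : TwoSidedIdeal R, P.IsPrimeIdeal → x ∈ P }

/-- `x` is an `m`-nilpotent element of the ring `R`: every `m`-sequence
`a_{n+1} = a_n u_n a_n` (`u_n ∈ R`) with `a_1 = x` reaches `0`. -/
def IsMNilpotent {R : Type w} [NonUnitalRing R] (x : R) : Prop :=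
  ∀ a : ℕ → R, a 0 = x → (∀ n, ∃ u : R, a (n + 1) = a n * u * a n) → ∃ k, a k = 0

/-- `x` is `m`-nilpotent in the subring given by the subset `T` of `R`:
every `m`-sequence lying in `T`, with multipliers `u_n ∈ T`, starting at `x`,
reaches `0`. -/
def IsMNilpotentIn {R : Type w} [NonUnitalRing R] (T : Set R) (x : R) : Prop :=
  ∀ a : ℕ → R, (∀ n, a n ∈ T) → a 0 = x →
    (∀ n, ∃ u ∈ T, a (n + 1) = a n * u * a n) → ∃ k, a k = 0

/-- A ring is prime if `BC = 0` implies `B = 0` or `C = 0` for all two-sided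
ideals `B, C`. -/
def IsPrimeRing : Prop :=
  ∀ B C : TwoSidedIdeal R, (∀ b ∈ B, ∀ c ∈ C, b * c = 0) → B = ⊥ ∨ C = ⊥

/-- A ring is semiprime if `B·B = 0` implies `B = 0` for every two-sided
ideal `B`. -/
def IsSemiprimeRing : Prop :=
  ∀ B : TwoSidedIdeal R, (∀ x ∈ B, ∀ y ∈ B, x * y = 0) → B = ⊥

/-- The annihilator `B* = {x ∈ R | xB = Bx = 0}` of a two-sided ideal. -/
def TwoSidedIdeal.annihilator {R : Type w} [NonUnitalRing R]
    (B : TwoSidedIdeal R) : TwoSidedIdeal R :=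
  TwoSidedIdeal.mk' { x | ∀ b ∈ B, x * b = 0 ∧ b * x = 0 }
    (fun b hb => ⟨zero_mul b, mul_zero b⟩)
    (fun {x y} hx hy b hb =>
      ⟨by rw [add_mul, (hx b hb).1, (hy b hb).1, add_zero],
       by rw [mul_add, (hx b hb).2, (hy b hb).2, add_zero]⟩)
    (fun {x} hx b hb =>
      ⟨by rw [neg_mul, (hx b hb).1, neg_zero],
       by rw [mul_neg, (hx b hb).2, neg_zero]⟩)
    (fun {x y} hy b hb => by
      refine ⟨?_, ?_⟩
      · rw [mul_assoc, (hy b hb).1, mul_zero]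
      · rw [← mul_assoc]
        exact (hy (b * x) (B.mul_mem_right b x hb)).2)
    (fun {x y} hx b hb => by
      refine ⟨?_, ?_⟩
      · rw [mul_assoc]
        exact (hx (y * b) (B.mul_mem_left y b hb)).1
      · rw [← mul_assoc, (hx b hb).2, zero_mul])

end RingNotions

/-- A g.m.ideal of the g.m.ring of `S`: a family of additive subgroups
`B i j ≤ A i j` with `B_{ij} A_{jk} ⊆ B_{ik}` and `A_{ij} B_{jk} ⊆ B_{ik}`. -/
structure GMIdeal (S : GammaSystem I) where
  B : ∀ i j : I, AddSubgroup (S.A i j)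
  mul_mem_right : ∀ {i j k : I} (x : S.A i j) (z : S.A j k), x ∈ B i j → S.mul x z ∈ B i k
  mul_mem_left : ∀ {i j k : I} (x : S.A i j) (z : S.A j k), z ∈ B j k → S.mul x z ∈ B i k

namespace GMIdeal

variable {S : GammaSystem I} (N : GMIdeal S)

/-- The subset of the g.m.ring consisting of the generalized matrices all of
whose components lie in the g.m.ideal `N`. -/
def carrier : Set (GMRing S) := { x | ∀ p : I × I, x p ∈ N.B p.1 p.2 }

/-- A g.m.ideal is zero if all its components are the zero subgroup. -/
def IsZero : Prop := ∀ i j : I, N.B i j = ⊥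

/-- A g.m.ideal regarded as a g.m.ring (a `Γ_I`-system) in its own right. -/
def toSystem : GammaSystem I where
  A i j := N.B i j
  inst i j := inferInstance
  mul {i j k} x z := ⟨S.mul x.1 z.1, N.mul_mem_right x.1 z.1 x.2⟩
  add_mul x y z := Subtype.ext (S.add_mul x.1 y.1 z.1)
  mul_add w x y := Subtype.ext (S.mul_add w.1 x.1 y.1)
  mul_assoc w x z := Subtype.ext (S.mul_assoc w.1 x.1 z.1)

/-- The quotient g.m.ring `A//B`, with components `A_{ij}/B_{ij}`. -/
def quotSystem : GammaSystem I where
  A i j := S.A i j ⧸ N.B i j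
  inst i j := inferInstance
  mul {i j k} x z :=
    Quotient.liftOn₂' x z
      (fun a b => ((S.mul a b : S.A i k) : S.A i k ⧸ N.B i k))
      (by
        intro a₁ a₂ b₁ b₂ h₁ h₂
        replace h₁ := (QuotientAddGroup.leftRel_apply).mp h₁
        replace h₂ := (QuotientAddGroup.leftRel_apply).mp h₂
        refine (QuotientAddGroup.eq).mpr ?_
        have : -(S.mul a₁ a₂) + S.mul b₁ b₂ =
            S.mul (-a₁ + b₁) a₂ + S.mul b₁ (-a₂ + b₂) := by
          rw [S.add_mul, S.mul_add, S.neg_mul', S.mul_neg']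
          abel
        rw [this]
        exact add_mem (N.mul_mem_right _ _ h₁) (N.mul_mem_left _ _ h₂))
  add_mul {i j k} x y z := by
    refine Quotient.inductionOn₃' x y z ?_
    intro a b c
    show ((S.mul (a + b) c : S.A i k) : S.A i k ⧸ N.B i k) = _
    rw [S.add_mul]
    rfl
  mul_add {i j k} w x y := by
    refine Quotient.inductionOn₃' w x y ?_
    intro a b c
    show ((S.mul a (b + c) : S.A i k) : S.A i k ⧸ N.B i k) = _
    rw [S.mul_add]
    rfl
  mul_assoc {l i j k} w x z := by
    refine Quotient.inductionOn₃' w x z ?_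
    intro a b c
    show ((S.mul a (S.mul b c) : S.A l k) : S.A l k ⧸ N.B l k) = _
    rw [S.mul_assoc]
    rfl

/-- The annihilator g.m.ideal `B* = {x ∈ A | xB = Bx = 0}` of a g.m.ideal. -/
def ann : GMIdeal S where
  B i j :=
    { carrier := { x | (∀ (k : I) (b : S.A j k), b ∈ N.B j k → S.mul x b = 0) ∧
        (∀ (k : I) (b : S.A k i), b ∈ N.B k i → S.mul b x = 0) }
      add_mem' := by
        rintro x y ⟨hx₁, hx₂⟩ ⟨hy₁, hy₂⟩
        refine ⟨fun k b hb => ?_, fun k b hb => ?_⟩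
        · rw [S.add_mul, hx₁ k b hb, hy₁ k b hb, add_zero]
        · rw [S.mul_add, hx₂ k b hb, hy₂ k b hb, add_zero]
      zero_mem' := ⟨fun k b _ => S.zero_mul' b, fun k b _ => S.mul_zero' b⟩
      neg_mem' := by
        rintro x ⟨hx₁, hx₂⟩
        refine ⟨fun k b hb => ?_, fun k b hb => ?_⟩
        · rw [S.neg_mul', hx₁ k b hb, neg_zero]
        · rw [S.mul_neg', hx₂ k b hb, neg_zero] }
  mul_mem_right := by
    rintro i j k x z ⟨hx₁, hx₂⟩
    refine ⟨fun m b hb => ?_, fun m b hb => ?_⟩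
    · rw [← S.mul_assoc]
      exact hx₁ m (S.mul z b) (N.mul_mem_left z b hb)
    · rw [S.mul_assoc, hx₂ m b hb, S.zero_mul']
  mul_mem_left := by
    rintro i j k x z ⟨hz₁, hz₂⟩
    refine ⟨fun m b hb => ?_, fun m b hb => ?_⟩
    · rw [← S.mul_assoc, hz₁ m b hb, S.mul_zero']
    · rw [S.mul_assoc]
      exact hz₂ m (S.mul b x) (N.mul_mem_right b x hb)

/-- `N` is a "Baer radical" g.m.ideal: every element of the ring `N` is
`m`-nilpotent in the ring `N`. -/
def IsBaerGMIdeal : Prop := ∀ x ∈ N.carrier, IsMNilpotentIn N.carrier x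

end GMIdeal

/-- A g.m.homomorphism between two g.m.rings over the same index set. -/
structure GMHom (S T : GammaSystem I) where
  f : ∀ i j : I, S.A i j → T.A i j
  map_add : ∀ {i j : I} (x y : S.A i j), f i j (x + y) = f i j x + f i j y
  map_mul : ∀ {i j k : I} (x : S.A i j) (z : S.A j k),
    f i k (S.mul x z) = T.mul (f i j x) (f j k z)

/-- A g.m.homomorphism is surjective if each component map is onto. -/
def GMHom.Surjective {S T : GammaSystem I} (ψ : GMHom S T) : Prop :=
  ∀ i j : I, Function.Surjective (ψ.f i j)

/-- The componentwise intersection `\bar r_b(A)` of all g.m.ideals `B` of `A`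
such that the quotient ring `A//B` is a prime ring. -/
def gmBarBaer (S : GammaSystem I) : Set (GMRing S) :=
  { x | ∀ B : GMIdeal S, IsPrimeRing (GMRing B.quotSystem) →
      ∀ p : I × I, x p ∈ B.B p.1 p.2 }

section RadicalTheory

/-- `N` is the largest g.m.ideal of `S` belonging (as a g.m.ring) to the
class `r`. -/
def IsLargestRadicalIdeal (r : ∀ I₀ : Type u, GammaSystem.{u, v} I₀ → Prop)
    {I : Type u} (S : GammaSystem I) (N : GMIdeal S) : Prop :=
  r I N.toSystem ∧ ∀ M : GMIdeal S, r I M.toSystem → ∀ i j : I, M.B i j ≤ N.B i j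

/-- `r` is a radical property of g.m.rings: (R1) closure under surjective
g.m.homomorphic images; (R2) every g.m.ring has a largest `r`-g.m.ideal `r(A)`;
(R3) `A//r(A)` has no non-zero `r`-g.m.ideal. -/
def IsGMRadicalProperty (r : ∀ I₀ : Type u, GammaSystem.{u, v} I₀ → Prop) : Prop :=
  (∀ (I₀ : Type u) (S T : GammaSystem I₀) (ψ : GMHom S T),
      ψ.Surjective → r I₀ S → r I₀ T) ∧
  (∀ (I₀ : Type u) (S : GammaSystem I₀), ∃ N : GMIdeal S,
      IsLargestRadicalIdeal r S N ∧
      ∀ P : GMIdeal N.quotSystem, r I₀ P.toSystem → P.IsZero)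

/-- `S` is `r`-semisimple: `r(S) = 0`, i.e. every `r`-g.m.ideal of `S` is zero. -/
def GMSemisimple (r : ∀ I₀ : Type u, GammaSystem.{u, v} I₀ → Prop)
    {I : Type u} (S : GammaSystem I) : Prop :=
  ∀ N : GMIdeal S, r I N.toSystem → N.IsZero

/-- `S` can be g.m.homomorphically mapped onto a non-zero member of the
class `K`. -/
def MapsOntoNonzeroMember (K : ∀ I₀ : Type u, GammaSystem.{u, v} I₀ → Prop)
    {I : Type u} (S : GammaSystem I) : Prop :=
  ∃ (T : GammaSystem.{u, v} I) (ψ : GMHom S T),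
    ψ.Surjective ∧ ¬ T.IsZero ∧ K I T

/-- Condition (Q1): every non-zero g.m.ideal of any member of `K` can be
g.m.homomorphically mapped onto a non-zero member of `K`. -/
def Q1Cond (K : ∀ I₀ : Type u, GammaSystem.{u, v} I₀ → Prop) : Prop :=
  ∀ (I₀ : Type u) (S : GammaSystem I₀), K I₀ S →
    ∀ N : GMIdeal S, ¬ N.IsZero → MapsOntoNonzeroMember K N.toSystem

/-- Condition (Q2): if every non-zero g.m.ideal of `A` can be
g.m.homomorphically mapped onto a non-zero member of `K`, then `A ∈ K`. -/
def Q2Cond (K : ∀ I₀ : Type u, GammaSystem.{u, v} I₀ → Prop) : Prop :=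
  ∀ (I₀ : Type u) (S : GammaSystem I₀),
    (∀ N : GMIdeal S, ¬ N.IsZero → MapsOntoNonzeroMember K N.toSystem) → K I₀ S

/-- The radical class of the upper radical `r^K` determined by `K`: the
g.m.rings which cannot be g.m.homomorphically mapped onto a non-zero member
of `K`. -/
def UpperRadicalClass (K : ∀ I₀ : Type u, GammaSystem.{u, v} I₀ → Prop)
    (I : Type u) (S : GammaSystem I) : Prop :=
  ¬ MapsOntoNonzeroMember K S

/-- A g.m.weakly special class: (WS1) every member is a semiprime ring;
(WS2) g.m.ideals of members are members; (WS3) if a g.m.ideal `B` of `A`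
is in the class, then `A//B*` is in the class. -/
def IsGMWeaklySpecial (K : ∀ I₀ : Type u, GammaSystem.{u, v} I₀ → Prop) : Prop :=
  (∀ (I₀ : Type u) (S : GammaSystem I₀), K I₀ S → IsSemiprimeRing (GMRing S)) ∧
  (∀ (I₀ : Type u) (S : GammaSystem I₀) (B : GMIdeal S), K I₀ S → K I₀ B.toSystem) ∧
  (∀ (I₀ : Type u) (S : GammaSystem I₀) (B : GMIdeal S),
      K I₀ B.toSystem → K I₀ B.ann.quotSystem)

/-- A g.m.special class: (S1) every member is a prime ring;
(S2) g.m.ideals of members are members; (S3) if a g.m.ideal `B` of `A`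
is in the class, then `A//B*` is in the class. -/
def IsGMSpecial (K : ∀ I₀ : Type u, GammaSystem.{u, v} I₀ → Prop) : Prop :=
  (∀ (I₀ : Type u) (S : GammaSystem I₀), K I₀ S → IsPrimeRing (GMRing S)) ∧
  (∀ (I₀ : Type u) (S : GammaSystem I₀) (B : GMIdeal S), K I₀ S → K I₀ B.toSystem) ∧
  (∀ (I₀ : Type u) (S : GammaSystem I₀) (B : GMIdeal S),
      K I₀ B.toSystem → K I₀ B.ann.quotSystem)

end RadicalTheory

section RingClasses

/-- A weakly special class of (possibly non-unital) rings: members are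
semiprime, two-sided ideals of members are members (as rings), and if a
two-sided ideal `B` of `A` is a member then `A/B*` is a member. -/
def IsWeaklySpecialRingClass (K : ∀ (R : Type w) [NonUnitalRing R], Prop) : Prop :=
  (∀ (R : Type w) [NonUnitalRing R], K R → IsSemiprimeRing R) ∧
  (∀ (R : Type w) [NonUnitalRing R] (B : TwoSidedIdeal R), K R → K B) ∧
  (∀ (R : Type w) [NonUnitalRing R] (B : TwoSidedIdeal R),
      K B → K B.annihilator.ringCon.Quotient)

/-- A special class of rings: a weakly special class all of whose members are
prime rings. -/
def IsSpecialRingClass (K : ∀ (R : Type w) [NonUnitalRing R], Prop) : Prop :=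
  (∀ (R : Type w) [NonUnitalRing R], K R → IsPrimeRing R) ∧
  (∀ (R : Type w) [NonUnitalRing R] (B : TwoSidedIdeal R), K R → K B) ∧
  (∀ (R : Type w) [NonUnitalRing R] (B : TwoSidedIdeal R),
      K B → K B.annihilator.ringCon.Quotient)

/-- The (upper) radical of the ring `R` determined by a class `K` of rings:
the intersection of all two-sided ideals `B` with `R/B ∈ K`. -/
def ringRadical (K : ∀ (R : Type w) [NonUnitalRing R], Prop)
    (R : Type w) [NonUnitalRing R] : Set R :=
  { x | ∀ B : TwoSidedIdeal R, K B.ringCon.Quotient → x ∈ B }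

/-- A radical property of rings: closure under surjective homomorphic images,
existence of a largest `r`-ideal, and `r`-semisimplicity of the quotient by it. -/
def IsRingRadicalProperty (K : ∀ (R : Type w) [NonUnitalRing R], Prop) : Prop :=
  (∀ (R S : Type w) [NonUnitalRing R] [NonUnitalRing S] (f : R →ₙ+* S),
      Function.Surjective f → K R → K S) ∧
  (∀ (R : Type w) [NonUnitalRing R], ∃ B : TwoSidedIdeal R,
      K B ∧ (∀ C : TwoSidedIdeal R, K C → C ≤ B) ∧
      ∀ D : TwoSidedIdeal B.ringCon.Quotient, K D → D = ⊥)

end RingClasses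

/-- An ideal of the `A_{ts}`-ring `A_{st}` (a `Γ`-ring with `M = A_{st}`,
`Γ = A_{ts}`): an additive subgroup `B` with `B·A_{ts}·A_{st} ⊆ B` and
`A_{st}·A_{ts}·B ⊆ B`. -/
structure GammaIdeal (S : GammaSystem I) (s t : I) where
  carrier : AddSubgroup (S.A s t)
  mul_mem_right : ∀ b ∈ carrier, ∀ (u : S.A t s) (y : S.A s t),
    S.mul (S.mul b u) y ∈ carrier
  mul_mem_left : ∀ (x : S.A s t) (u : S.A t s), ∀ b ∈ carrier,
    S.mul (S.mul x u) b ∈ carrier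

/-! ### Auxiliary development for the proof -/

section ZhangRing

variable {R : Type w} [NonUnitalRing R]

/-- Helper: if `H` is an additive subgroup almost absorbed by multiplication
(modulo a prime `P`) and all products of its elements lie in `P`, then `H ⊆ P`. -/
theorem Zhang.prime_absorb {P : TwoSidedIdeal R} (hP : P.IsPrimeIdeal)
    (H : AddSubgroup R)
    (hl : ∀ r x, x ∈ H → r * x ∈ H ∨ r * x ∈ P)
    (hr : ∀ x r, x ∈ H → x * r ∈ H ∨ x * r ∈ P)
    (hmul : ∀ x ∈ H, ∀ y ∈ H, x * y ∈ P) :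
    ∀ x ∈ H, x ∈ P := by
  set car : Set R := {x | ∃ p ∈ P, ∃ h ∈ H, x = p + h} with hcar
  have hz : (0 : R) ∈ car := ⟨0, P.zero_mem, 0, H.zero_mem, by simp⟩
  have hadd : ∀ {x y}, x ∈ car → y ∈ car → x + y ∈ car := by
    rintro x y ⟨p, hp, h, hh, rfl⟩ ⟨p', hp', h', hh', rfl⟩
    exact ⟨p + p', P.add_mem hp hp', h + h', H.add_mem hh hh', by abel⟩
  have hneg : ∀ {x}, x ∈ car → -x ∈ car := by
    rintro x ⟨p, hp, h, hh, rfl⟩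
    exact ⟨-p, P.neg_mem hp, -h, H.neg_mem hh, by abel⟩
  have hml : ∀ {x y}, y ∈ car → x * y ∈ car := by
    rintro x y ⟨p, hp, h, hh, rfl⟩
    rcases hl x h hh with h' | h'
    · exact ⟨x * p, P.mul_mem_left _ _ hp, x * h, h', by rw [mul_add]⟩
    · exact ⟨x * p + x * h, P.add_mem (P.mul_mem_left _ _ hp) h', 0, H.zero_mem,
        by rw [mul_add, add_zero]⟩
  have hmr : ∀ {x y}, x ∈ car → x * y ∈ car := by
    rintro x y ⟨p, hp, h, hh, rfl⟩
    rcases hr h y hh with h' | h'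
    · exact ⟨p * y, P.mul_mem_right _ _ hp, h * y, h', by rw [add_mul]⟩
    · exact ⟨p * y + h * y, P.add_mem (P.mul_mem_right _ _ hp) h', 0, H.zero_mem,
        by rw [add_mul, add_zero]⟩
  set B : TwoSidedIdeal R := TwoSidedIdeal.mk' car hz hadd hneg hml hmr with hB
  have hBP : B ≤ P ∨ B ≤ P := by
    apply hP B B
    intro b hb c hc
    rw [hB, TwoSidedIdeal.mem_mk'] at hb hc
    obtain ⟨p, hp, h, hh, rfl⟩ := hb
    obtain ⟨p', hp', h', hh', rfl⟩ := hc
    have : (p + h) * (p' + h') = p * (p' + h') + h * p' + h * h' := by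
      rw [add_mul, mul_add h, ← add_assoc]
    rw [this]
    exact P.add_mem (P.add_mem (P.mul_mem_right _ _ hp) (P.mul_mem_left _ _ hp'))
      (hmul h hh h' hh')
  intro x hx
  have hxB : x ∈ B := by
    rw [hB, TwoSidedIdeal.mem_mk']
    exact ⟨0, P.zero_mem, x, hx, by simp⟩
  exact (hBP.elim id id) hxB

/-- Key lemma: modulo a prime ideal, a nonzero element has a nonzero "square"
`a * u * a`. -/
theorem Zhang.exists_mul_mul_not_mem {P : TwoSidedIdeal R} (hP : P.IsPrimeIdeal)
    {a : R} (ha : a ∉ P) : ∃ u : R, a * u * a ∉ P := by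
  by_contra hcon
  push_neg at hcon
  -- Step 1 : a * s ∈ P for all s
  have step1 : ∀ s : R, a * s ∈ P := by
    set G : Set R := {x | (∃ s, x = a * s) ∨ ∃ r s, x = r * a * s} with hG
    have hGl : ∀ r x, x ∈ G → r * x ∈ G := by
      rintro r x (⟨s, rfl⟩ | ⟨r', s, rfl⟩)
      · exact Or.inr ⟨r, s, by rw [mul_assoc]⟩
      · exact Or.inr ⟨r * r', s, by simp only [mul_assoc]⟩
    have hGr : ∀ x r, x ∈ G → x * r ∈ G := by
      rintro x r (⟨s, rfl⟩ | ⟨r', s, rfl⟩)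
      · exact Or.inl ⟨s * r, by rw [mul_assoc]⟩
      · exact Or.inr ⟨r', s * r, by simp only [mul_assoc]⟩
    have hGmul : ∀ x ∈ G, ∀ y ∈ G, x * y ∈ P := by
      have base : ∀ s s' : R, (a * s) * (a * s') ∈ P := by
        intro s s'
        have : (a * s) * (a * s') = (a * s * a) * s' := by simp only [mul_assoc]
        rw [this]
        exact P.mul_mem_right _ _ (hcon s)
      rintro x (⟨s, rfl⟩ | ⟨r', s, rfl⟩) y (⟨s', rfl⟩ | ⟨r'', s', rfl⟩)
      · exact base s s'
      · have : (a * s) * (r'' * a * s') = (a * (s * r'')) * (a * s') := by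
          simp only [mul_assoc]
        rw [this]; exact base _ _
      · have : (r' * a * s) * (a * s') = r' * ((a * s) * (a * s')) := by
          simp only [mul_assoc]
        rw [this]; exact P.mul_mem_left _ _ (base s s')
      · have : (r' * a * s) * (r'' * a * s') = r' * ((a * (s * r'')) * (a * s')) := by
          simp only [mul_assoc]
        rw [this]; exact P.mul_mem_left _ _ (base _ _)
    set H := AddSubgroup.closure G with hH
    have hHl : ∀ r x, x ∈ H → r * x ∈ H := by
      intro r x hx
      induction hx using AddSubgroup.closure_induction with
      | mem y hy => exact AddSubgroup.subset_closure (hGl r y hy)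
      | zero => rw [mul_zero]; exact H.zero_mem
      | add y z _ _ hy hz => rw [mul_add]; exact H.add_mem hy hz
      | neg y _ hy => rw [mul_neg]; exact H.neg_mem hy
    have hHr : ∀ x r, x ∈ H → x * r ∈ H := by
      intro x r hx
      induction hx using AddSubgroup.closure_induction with
      | mem y hy => exact AddSubgroup.subset_closure (hGr y r hy)
      | zero => rw [zero_mul]; exact H.zero_mem
      | add y z _ _ hy hz => rw [add_mul]; exact H.add_mem hy hz
      | neg y _ hy => rw [neg_mul]; exact H.neg_mem hy
    have hHmul : ∀ x ∈ H, ∀ y ∈ H, x * y ∈ P := by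
      intro x hx
      induction hx using AddSubgroup.closure_induction with
      | mem g hg =>
          intro y hy
          induction hy using AddSubgroup.closure_induction with
          | mem g' hg' => exact hGmul g hg g' hg'
          | zero => rw [mul_zero]; exact P.zero_mem
          | add y z _ _ hy hz => rw [mul_add]; exact P.add_mem hy hz
          | neg y _ hy => rw [mul_neg]; exact P.neg_mem hy
      | zero => intro y hy; rw [zero_mul]; exact P.zero_mem
      | add y z _ _ hy hz => intro w hw; rw [add_mul]; exact P.add_mem (hy w hw) (hz w hw)
      | neg y _ hy => intro w hw; rw [neg_mul]; exact P.neg_mem (hy w hw)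
    intro s
    exact Zhang.prime_absorb hP H (fun r x hx => Or.inl (hHl r x hx))
      (fun x r hx => Or.inl (hHr x r hx)) hHmul (a * s)
      (AddSubgroup.subset_closure (Or.inl ⟨s, rfl⟩))
  -- Step 2 : s * a ∈ P for all s
  have step2 : ∀ s : R, s * a ∈ P := by
    set G : Set R := {x | (∃ s, x = s * a) ∨ ∃ s t, x = s * (a * t)} with hG
    have hGl : ∀ r x, x ∈ G → r * x ∈ G := by
      rintro r x (⟨s, rfl⟩ | ⟨s, t, rfl⟩)
      · exact Or.inl ⟨r * s, by rw [mul_assoc]⟩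
      · exact Or.inr ⟨r * s, t, by rw [mul_assoc]⟩
    have hGr : ∀ x r, x ∈ G → x * r ∈ G := by
      rintro x r (⟨s, rfl⟩ | ⟨s, t, rfl⟩)
      · exact Or.inr ⟨s, r, by rw [mul_assoc]⟩
      · exact Or.inr ⟨s, t * r, by simp only [mul_assoc]⟩
    have hGmul : ∀ x ∈ G, ∀ y ∈ G, x * y ∈ P := by
      have base : ∀ s s' : R, (s * a) * (s' * a) ∈ P := by
        intro s s'
        have : (s * a) * (s' * a) = s * (a * s' * a) := by simp only [mul_assoc]
        rw [this]
        exact P.mul_mem_left _ _ (hcon s')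
      rintro x (⟨s, rfl⟩ | ⟨s, t, rfl⟩) y (⟨s', rfl⟩ | ⟨s', t', rfl⟩)
      · exact base s s'
      · have : (s * a) * (s' * (a * t')) = s * ((a * (s' * a)) * t') := by
          simp only [mul_assoc]
        rw [this]
        refine P.mul_mem_left _ _ (P.mul_mem_right _ _ ?_)
        have : a * (s' * a) = a * s' * a := by rw [mul_assoc]
        rw [this]; exact hcon s'
      · have : (s * (a * t)) * (s' * a) = s * ((a * (t * s') * a)) := by
          simp only [mul_assoc]
        rw [this]; exact P.mul_mem_left _ _ (hcon _)
      · have : (s * (a * t)) * (s' * (a * t')) = s * ((a * (t * s') * a) * t') := by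
          simp only [mul_assoc]
        rw [this]; exact P.mul_mem_left _ _ (P.mul_mem_right _ _ (hcon _))
    set H := AddSubgroup.closure G with hH
    have hHl : ∀ r x, x ∈ H → r * x ∈ H := by
      intro r x hx
      induction hx using AddSubgroup.closure_induction with
      | mem y hy => exact AddSubgroup.subset_closure (hGl r y hy)
      | zero => rw [mul_zero]; exact H.zero_mem
      | add y z _ _ hy hz => rw [mul_add]; exact H.add_mem hy hz
      | neg y _ hy => rw [mul_neg]; exact H.neg_mem hy
    have hHr : ∀ x r, x ∈ H → x * r ∈ H := by
      intro x r hx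
      induction hx using AddSubgroup.closure_induction with
      | mem y hy => exact AddSubgroup.subset_closure (hGr y r hy)
      | zero => rw [zero_mul]; exact H.zero_mem
      | add y z _ _ hy hz => rw [add_mul]; exact H.add_mem hy hz
      | neg y _ hy => rw [neg_mul]; exact H.neg_mem hy
    have hHmul : ∀ x ∈ H, ∀ y ∈ H, x * y ∈ P := by
      intro x hx
      induction hx using AddSubgroup.closure_induction with
      | mem g hg =>
          intro y hy
          induction hy using AddSubgroup.closure_induction with
          | mem g' hg' => exact hGmul g hg g' hg'
          | zero => rw [mul_zero]; exact P.zero_mem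
          | add y z _ _ hy hz => rw [mul_add]; exact P.add_mem hy hz
          | neg y _ hy => rw [mul_neg]; exact P.neg_mem hy
      | zero => intro y hy; rw [zero_mul]; exact P.zero_mem
      | add y z _ _ hy hz => intro w hw; rw [add_mul]; exact P.add_mem (hy w hw) (hz w hw)
      | neg y _ hy => intro w hw; rw [neg_mul]; exact P.neg_mem (hy w hw)
    intro s
    exact Zhang.prime_absorb hP H (fun r x hx => Or.inl (hHl r x hx))
      (fun x r hx => Or.inl (hHr x r hx)) hHmul (s * a)
      (AddSubgroup.subset_closure (Or.inl ⟨s, rfl⟩))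
  -- Step 3 : a ∈ P
  have step3 : a ∈ P := by
    set H := AddSubgroup.closure ({a} : Set R) with hH
    have hHl : ∀ r x, x ∈ H → r * x ∈ P := by
      intro r x hx
      induction hx using AddSubgroup.closure_induction with
      | mem y hy => rw [Set.mem_singleton_iff] at hy; rw [hy]; exact step2 r
      | zero => rw [mul_zero]; exact P.zero_mem
      | add y z _ _ hy hz => rw [mul_add]; exact P.add_mem hy hz
      | neg y _ hy => rw [mul_neg]; exact P.neg_mem hy
    have hHr : ∀ x r, x ∈ H → x * r ∈ P := by
      intro x r hx
      induction hx using AddSubgroup.closure_induction with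
      | mem y hy => rw [Set.mem_singleton_iff] at hy; rw [hy]; exact step1 r
      | zero => rw [zero_mul]; exact P.zero_mem
      | add y z _ _ hy hz => rw [add_mul]; exact P.add_mem hy hz
      | neg y _ hy => rw [neg_mul]; exact P.neg_mem hy
    have hHmul : ∀ x ∈ H, ∀ y ∈ H, x * y ∈ P := by
      intro x hx
      induction hx using AddSubgroup.closure_induction with
      | mem g hg =>
          rw [Set.mem_singleton_iff] at hg
          intro y hy
          induction hy using AddSubgroup.closure_induction with
          | mem g' hg' =>
              rw [Set.mem_singleton_iff] at hg'; rw [hg, hg']; exact step1 a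
          | zero => rw [mul_zero]; exact P.zero_mem
          | add y z _ _ hy hz => rw [mul_add]; exact P.add_mem hy hz
          | neg y _ hy => rw [mul_neg]; exact P.neg_mem hy
      | zero => intro y hy; rw [zero_mul]; exact P.zero_mem
      | add y z _ _ hy hz => intro w hw; rw [add_mul]; exact P.add_mem (hy w hw) (hz w hw)
      | neg y _ hy => intro w hw; rw [neg_mul]; exact P.neg_mem (hy w hw)
    exact Zhang.prime_absorb hP H (fun r x hx => Or.inr (hHl r x hx))
      (fun x r hx => Or.inr (hHr x r hx)) hHmul a
      (AddSubgroup.subset_closure rfl)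
  exact ha step3

/-- An `m`-nilpotent element lies in every prime two-sided ideal. -/
theorem Zhang.mem_of_isMNilpotent {x : R} (hx : IsMNilpotent x)
    {P : TwoSidedIdeal R} (hP : P.IsPrimeIdeal) : x ∈ P := by
  by_contra hxP
  let F : {y : R // y ∉ P} → {y : R // y ∉ P} := fun y =>
    ⟨y.1 * Classical.choose (Zhang.exists_mul_mul_not_mem hP y.2) * y.1,
      Classical.choose_spec (Zhang.exists_mul_mul_not_mem hP y.2)⟩
  let a : ℕ → R := fun n => (F^[n] ⟨x, hxP⟩).1
  have h0 : a 0 = x := rfl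
  have hstep : ∀ n, ∃ u, a (n + 1) = a n * u * a n := by
    intro n
    refine ⟨Classical.choose (Zhang.exists_mul_mul_not_mem hP (F^[n] ⟨x, hxP⟩).2), ?_⟩
    show (F^[n+1] ⟨x, hxP⟩).1 = _
    rw [Function.iterate_succ_apply']
  obtain ⟨k, hk⟩ := hx a h0 hstep
  have : a k ∉ P := (F^[k] ⟨x, hxP⟩).2
  rw [hk] at this
  exact this P.zero_mem

/-- Conversely, an element of every prime two-sided ideal is `m`-nilpotent. -/
theorem Zhang.isMNilpotent_of_mem {x : R}
    (h : ∀ P : TwoSidedIdeal R, P.IsPrimeIdeal → x ∈ P) : IsMNilpotent x := by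
  intro a h0 hstep
  by_contra hne
  push_neg at hne
  choose u hu using hstep
  set 𝒮 : Set (TwoSidedIdeal R) := {P | ∀ n, a n ∉ P} with h𝒮
  have hzorn : ∃ m, Maximal (· ∈ 𝒮) m := by
    apply zorn_le₀
    intro c hc hchain
    by_cases hne' : c.Nonempty
    · obtain ⟨P₀, hP₀⟩ := hne'
      refine ⟨TwoSidedIdeal.mk' {y | ∃ Q ∈ c, y ∈ Q}
        ⟨P₀, hP₀, P₀.zero_mem⟩
        (fun {y z} hy hz => ?_)
        (fun {y} hy => hy.imp fun Q hQ => ⟨hQ.1, Q.neg_mem hQ.2⟩)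
        (fun {y z} hz => hz.imp fun Q hQ => ⟨hQ.1, Q.mul_mem_left _ _ hQ.2⟩)
        (fun {y z} hy => hy.imp fun Q hQ => ⟨hQ.1, Q.mul_mem_right _ _ hQ.2⟩), ?_, ?_⟩
      · obtain ⟨Q₁, hQ₁, hy⟩ := hy
        obtain ⟨Q₂, hQ₂, hz⟩ := hz
        rcases hchain.total hQ₁ hQ₂ with hle | hle
        · exact ⟨Q₂, hQ₂, Q₂.add_mem (hle hy) hz⟩
        · exact ⟨Q₁, hQ₁, Q₁.add_mem hy (hle hz)⟩
      · intro n hn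
        rw [TwoSidedIdeal.mem_mk'] at hn
        obtain ⟨Q, hQ, hmem⟩ := hn
        exact hc hQ n hmem
      · intro Q hQ y hy
        rw [TwoSidedIdeal.mem_mk']
        exact ⟨Q, hQ, hy⟩
    · rw [Set.not_nonempty_iff_eq_empty] at hne'
      exact ⟨⊥, fun n hn => hne n (by rwa [TwoSidedIdeal.mem_bot] at hn), by simp [hne']⟩
  obtain ⟨P, hPmax⟩ := hzorn
  have hPprime : P.IsPrimeIdeal := by
    intro B C hBC
    by_contra hcon
    push_neg at hcon
    obtain ⟨hB, hC⟩ := hcon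
    have hmono : ∀ (Q : TwoSidedIdeal R) (m), a m ∈ Q → ∀ k, m ≤ k → a k ∈ Q := by
      intro Q m hm k hk
      induction k, hk using Nat.le_induction with
      | base => exact hm
      | succ k hk ih =>
          rw [hu k]
          exact Q.mul_mem_right _ _ (Q.mul_mem_right _ _ ih)
    have hsup : ∀ D : TwoSidedIdeal R, ¬(D ≤ P) → ∃ m, a m ∈ P ⊔ D := by
      intro D hD
      by_contra hQ
      push_neg at hQ
      have h1 : P ≤ P ⊔ D := le_sup_left
      have h2 := hPmax.2 (y := P ⊔ D) (fun n => hQ n) h1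
      exact hD (le_trans le_sup_right h2)
    obtain ⟨m, hm⟩ := hsup B hB
    obtain ⟨n, hn⟩ := hsup C hC
    set k := max m n with hk
    have hkB : a k ∈ P ⊔ B := hmono _ m hm k (le_max_left m n)
    have hkC : a k ∈ P ⊔ C := hmono _ n hn k (le_max_right m n)
    have hkB' : a k * u k ∈ P ⊔ B := TwoSidedIdeal.mul_mem_right _ _ _ hkB
    rw [TwoSidedIdeal.mem_sup] at hkB' hkC
    obtain ⟨p, hp, b, hb, hpb⟩ := hkB'
    obtain ⟨p', hp', c, hc, hpc⟩ := hkC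
    have : a (k + 1) ∈ P := by
      rw [hu k, ← hpb, ← hpc]
      have : (p + b) * (p' + c) = p * (p' + c) + b * p' + b * c := by
        rw [add_mul, mul_add b, ← add_assoc]
      rw [this]
      exact P.add_mem (P.add_mem (P.mul_mem_right _ _ hp) (P.mul_mem_left _ _ hp'))
        (hBC b hb c hc)
    exact hPmax.1 (k + 1) this
  exact hPmax.1 0 (h0 ▸ h P hPprime)

theorem Zhang.baerRadical_eq :
    baerRadical R = {x : R | IsMNilpotent x} := by
  ext x
  exact ⟨fun h => Zhang.isMNilpotent_of_mem h, fun h P hP => Zhang.mem_of_isMNilpotent h hP⟩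

theorem Zhang.bot_isPrimeIdeal (h : IsPrimeRing R) :
    (⊥ : TwoSidedIdeal R).IsPrimeIdeal := by
  intro B C hBC
  have := h B C (fun b hb c hc => by
    have := hBC b hb c hc
    rwa [TwoSidedIdeal.mem_bot] at this)
  rcases this with h' | h'
  · exact Or.inl (le_of_eq h')
  · exact Or.inr (le_of_eq h')

end ZhangRing

section ZhangGM

variable {I : Type u} (T : GammaSystem.{u, v} I)

namespace Zhang

lemma mul_def (x y : GMRing T) : x * y = T.gmul x y := rfl

open Classical in
lemma single_mul_single {i j k : I} (a : T.A i j) (b : T.A j k) :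
    (DFinsupp.single ((i, j) : I × I) a : GMRing T) * (DFinsupp.single ((j, k) : I × I) b : GMRing T)
      = DFinsupp.single ((i, k) : I × I) (T.mul a b) := by
  rw [mul_def, T.gmul_single_single (i, j) (j, k) a b, dif_pos rfl]
  rfl

open Classical in
lemma single_mul_single_of_ne {i j k l : I} (h : j ≠ k) (a : T.A i j) (b : T.A k l) :
    (DFinsupp.single ((i, j) : I × I) a : GMRing T) * (DFinsupp.single ((k, l) : I × I) b : GMRing T)
      = 0 := by
  rw [mul_def, T.gmul_single_single (i, j) (k, l) a b, dif_neg h]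

open Classical in
lemma single_mul_single_apply {i j m : I} (a : T.A i j) (q : I × I) (b : T.A q.1 q.2) :
    ((DFinsupp.single ((i, j) : I × I) a : GMRing T) * (DFinsupp.single q b : GMRing T)) (i, m)
      = T.mul a ((DFinsupp.single q b : GMRing T) (j, m)) := by
  obtain ⟨q1, q2⟩ := q
  by_cases h1 : j = q1
  · subst h1
    rw [single_mul_single]
    by_cases h2 : q2 = m
    · subst h2
      rw [DFinsupp.single_eq_same, DFinsupp.single_eq_same]
    · rw [DFinsupp.single_eq_of_ne (fun h => h2 (congrArg Prod.snd h.symm)),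
        DFinsupp.single_eq_of_ne (fun h => h2 (congrArg Prod.snd h.symm)), T.mul_zero']
  · rw [single_mul_single_of_ne T h1,
      DFinsupp.single_eq_of_ne (fun h => h1 (congrArg Prod.fst h)), T.mul_zero']
    rfl

open Classical in
lemma single_mul_apply {i j : I} (a : T.A i j) (y : GMRing T) (m : I) :
    ((DFinsupp.single ((i, j) : I × I) a : GMRing T) * y) (i, m) = T.mul a (y (j, m)) := by
  induction y using DFinsupp.induction with
  | h0 =>
      rw [mul_zero]
      show (0 : T.A i m) = T.mul a (0 : T.A j m)
      rw [T.mul_zero']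
  | ha q b f hf hb ih =>
      rw [mul_add, DFinsupp.add_apply, DFinsupp.add_apply, T.mul_add, ih,
        single_mul_single_apply]

open Classical in
lemma single_mul_apply_of_ne {i j : I} (a : T.A i j) (y : GMRing T)
    {q : I × I} (h : q.1 ≠ i) :
    ((DFinsupp.single ((i, j) : I × I) a : GMRing T) * y) q = 0 := by
  induction y using DFinsupp.induction with
  | h0 => rw [mul_zero]; rfl
  | ha r b f hf hb ih =>
      rw [mul_add, DFinsupp.add_apply, ih, add_zero]
      obtain ⟨r1, r2⟩ := r
      by_cases h1 : j = r1
      · subst h1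
        rw [single_mul_single]
        exact DFinsupp.single_eq_of_ne (fun hh => h (congrArg Prod.fst hh))
      · rw [single_mul_single_of_ne T h1]
        rfl

open Classical in
lemma mul_single_single_apply {j k m : I} (b : T.A j k) (q : I × I) (a : T.A q.1 q.2) :
    ((DFinsupp.single q a : GMRing T) * (DFinsupp.single ((j, k) : I × I) b : GMRing T)) (m, k)
      = T.mul ((DFinsupp.single q a : GMRing T) (m, j)) b := by
  obtain ⟨q1, q2⟩ := q
  by_cases h1 : q2 = j
  · subst h1
    rw [single_mul_single]
    by_cases h2 : q1 = m
    · subst h2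
      rw [DFinsupp.single_eq_same, DFinsupp.single_eq_same]
    · rw [DFinsupp.single_eq_of_ne (fun h => h2 (congrArg Prod.fst h.symm)),
        DFinsupp.single_eq_of_ne (fun h => h2 (congrArg Prod.fst h.symm)), T.zero_mul']
  · rw [single_mul_single_of_ne T h1,
      DFinsupp.single_eq_of_ne (fun h => h1 (congrArg Prod.snd h.symm)), T.zero_mul']
    rfl

open Classical in
lemma mul_single_apply {j k : I} (b : T.A j k) (y : GMRing T) (m : I) :
    (y * (DFinsupp.single ((j, k) : I × I) b : GMRing T)) (m, k) = T.mul (y (m, j)) b := by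
  induction y using DFinsupp.induction with
  | h0 =>
      rw [zero_mul]
      show (0 : T.A m k) = T.mul (0 : T.A m j) b
      rw [T.zero_mul']
  | ha q a f hf ha' ih =>
      rw [add_mul, DFinsupp.add_apply, DFinsupp.add_apply, T.add_mul, ih,
        mul_single_single_apply]

open Classical in
lemma triple_single (p : I × I) (c : T.A p.1 p.2) {i j : I} (v : T.A j i) (y : GMRing T) :
    ((DFinsupp.single p c : GMRing T) * (DFinsupp.single ((j, i) : I × I) v : GMRing T) * y) (i, j)
      = T.mul (T.mul ((DFinsupp.single p c : GMRing T) (i, j)) v) (y (i, j)) := by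
  obtain ⟨p1, p2⟩ := p
  by_cases h1 : p2 = j
  · subst h1
    rw [single_mul_single]
    by_cases h2 : p1 = i
    · subst h2
      rw [single_mul_apply, DFinsupp.single_eq_same]
    · rw [single_mul_apply_of_ne T _ _ (show i ≠ p1 from fun h => h2 h.symm),
        DFinsupp.single_eq_of_ne (fun h => h2 (congrArg Prod.fst h.symm)), T.zero_mul',
        T.zero_mul']
  · rw [single_mul_single_of_ne T h1, zero_mul,
      DFinsupp.single_eq_of_ne (fun h => h1 (congrArg Prod.snd h.symm)), T.zero_mul',
      T.zero_mul']
    rfl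

open Classical in
lemma triple_apply (x : GMRing T) {i j : I} (v : T.A j i) (y : GMRing T) :
    (x * (DFinsupp.single ((j, i) : I × I) v : GMRing T) * y) (i, j)
      = T.mul (T.mul (x (i, j)) v) (y (i, j)) := by
  induction x using DFinsupp.induction with
  | h0 =>
      rw [zero_mul, zero_mul]
      show (0 : T.A i j) = T.mul (T.mul (0 : T.A i j) v) _
      rw [T.zero_mul', T.zero_mul']
  | ha p c f hf hc ih =>
      rw [add_mul, add_mul, DFinsupp.add_apply, DFinsupp.add_apply, T.add_mul, T.add_mul,
        ih, triple_single]

open Classical in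
lemma triple_single_single (p q : I × I) (a : T.A p.1 p.2) (b : T.A q.1 q.2)
    (m : I × I) (c : T.A m.1 m.2) :
    (DFinsupp.single p a : GMRing T) * (DFinsupp.single m c : GMRing T) * (DFinsupp.single q b : GMRing T)
      = DFinsupp.single ((p.1, q.2) : I × I)
          (T.mul (T.mul a ((DFinsupp.single m c : GMRing T) (p.2, q.1))) b) := by
  obtain ⟨p1, p2⟩ := p
  obtain ⟨q1, q2⟩ := q
  obtain ⟨m1, m2⟩ := m
  by_cases h1 : p2 = m1
  · subst h1
    rw [single_mul_single]
    by_cases h2 : m2 = q1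
    · subst h2
      rw [single_mul_single, DFinsupp.single_eq_same]
    · rw [single_mul_single_of_ne T h2,
        DFinsupp.single_eq_of_ne (fun h => h2 (congrArg Prod.snd h.symm)), T.mul_zero',
        T.zero_mul', DFinsupp.single_zero]
  · rw [single_mul_single_of_ne T h1, zero_mul,
      DFinsupp.single_eq_of_ne (fun h => h1 (congrArg Prod.fst h)), T.mul_zero',
      T.zero_mul', DFinsupp.single_zero]

open Classical in
lemma single_mul_mul_single (p q : I × I) (a : T.A p.1 p.2) (b : T.A q.1 q.2)
    (u : GMRing T) :
    (DFinsupp.single p a : GMRing T) * u * (DFinsupp.single q b : GMRing T)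
      = DFinsupp.single ((p.1, q.2) : I × I) (T.mul (T.mul a (u (p.2, q.1))) b) := by
  induction u using DFinsupp.induction with
  | h0 =>
      rw [mul_zero, zero_mul]
      show (0 : GMRing T) = _
      rw [show ((0 : GMRing T) (p.2, q.1)) = 0 from rfl, T.mul_zero', T.zero_mul',
        DFinsupp.single_zero]
  | ha m c f hfm hc ih =>
      rw [mul_add, add_mul, ih, triple_single_single, DFinsupp.add_apply, T.mul_add,
        T.add_mul, DFinsupp.single_add]

end Zhang

end ZhangGM

section ZhangGM2

variable {I : Type u} (T : GammaSystem.{u, v} I)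

namespace Zhang

lemma mnilpotent_zero (i j : I) : T.MNilpotent i j 0 :=
  fun b hb0 _ => ⟨0, hb0⟩

open Classical in
lemma isMNilpotent_single_iff {i j : I} (c : T.A i j) :
    IsMNilpotent (DFinsupp.single ((i, j) : I × I) c : GMRing T) ↔ T.MNilpotent i j c := by
  constructor
  · intro h b hb0 hbstep
    choose v hv using hbstep
    have h0 : (DFinsupp.single ((i, j) : I × I) (b 0) : GMRing T)
        = DFinsupp.single ((i, j) : I × I) c := by rw [hb0]
    have hstep : ∀ n, ∃ u : GMRing T,
        (DFinsupp.single ((i, j) : I × I) (b (n + 1)) : GMRing T)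
          = (DFinsupp.single ((i, j) : I × I) (b n) : GMRing T) * u
            * DFinsupp.single ((i, j) : I × I) (b n) := by
      intro n
      refine ⟨DFinsupp.single ((j, i) : I × I) (v n), ?_⟩
      rw [single_mul_mul_single T (i, j) (i, j) (b n) (b n), DFinsupp.single_eq_same,
        hv n]
    obtain ⟨k, hk⟩ := h (fun n => DFinsupp.single ((i, j) : I × I) (b n)) h0 hstep
    exact ⟨k, by rwa [DFinsupp.single_eq_zero] at hk⟩
  · intro hc a ha0 hstep
    choose u hu using hstep
    let g : ℕ → T.A i j := fun n =>
      Nat.rec c (fun n gn => T.mul (T.mul gn ((u n) (j, i))) gn) n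
    have hag : ∀ n, a n = DFinsupp.single ((i, j) : I × I) (g n) := by
      intro n
      induction n with
      | zero => exact ha0
      | succ n ih =>
          have hgs : g (n + 1) = T.mul (T.mul (g n) ((u n) (j, i))) (g n) := rfl
          rw [hu n, ih, single_mul_mul_single T (i, j) (i, j) (g n) (g n), hgs]
    obtain ⟨k, hk⟩ := hc g rfl (fun n => ⟨(u n) (j, i), rfl⟩)
    exact ⟨k, by rw [hag k, hk, DFinsupp.single_zero]⟩

open Classical in
lemma mnilpotent_component {x : GMRing T} (hx : IsMNilpotent x) (i j : I) :
    T.MNilpotent i j (x (i, j)) := by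
  intro b hb0 hbstep
  choose v hv using hbstep
  let a : ℕ → GMRing T := fun n =>
    Nat.rec x (fun n an =>
      an * (DFinsupp.single ((j, i) : I × I) (v n) : GMRing T) * an) n
  have hcomp : ∀ n, (a n) (i, j) = b n := by
    intro n
    induction n with
    | zero => exact hb0.symm
    | succ n ih =>
        have hs : a (n + 1)
            = a n * (DFinsupp.single ((j, i) : I × I) (v n) : GMRing T) * a n := rfl
        rw [hs, triple_apply, ih, ← hv n]
  obtain ⟨k, hk⟩ := hx a rfl
    (fun n => ⟨(DFinsupp.single ((j, i) : I × I) (v n) : GMRing T), rfl⟩)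
  exact ⟨k, by rw [← hcomp k, hk]; rfl⟩

lemma quot_mul_mk (N : GMIdeal T) {i j k : I} (a : T.A i j) (b : T.A j k) :
    N.quotSystem.mul (QuotientAddGroup.mk a) (QuotientAddGroup.mk b)
      = QuotientAddGroup.mk (T.mul a b) := rfl

lemma mnilpotent_quot (N : GMIdeal T) {i j : I} {c : T.A i j}
    (hc : T.MNilpotent i j c) :
    N.quotSystem.MNilpotent i j (QuotientAddGroup.mk c) := by
  intro t ht0 htstep
  choose w hw using htstep
  let v : ℕ → T.A j i := fun n => Classical.choose (QuotientAddGroup.mk_surjective (w n))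
  have hvspec : ∀ n, (QuotientAddGroup.mk (v n) : T.A j i ⧸ N.B j i) = w n :=
    fun n => Classical.choose_spec (QuotientAddGroup.mk_surjective (w n))
  let a : ℕ → T.A i j := fun n => Nat.rec c (fun n an => T.mul (T.mul an (v n)) an) n
  have hat : ∀ n, (QuotientAddGroup.mk (a n) : T.A i j ⧸ N.B i j) = t n := by
    intro n
    induction n with
    | zero => exact ht0.symm
    | succ n ih =>
        have hs : a (n + 1) = T.mul (T.mul (a n) (v n)) (a n) := rfl
        rw [hs, ← quot_mul_mk, ← quot_mul_mk, ih, hvspec n, ← hw n]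
  obtain ⟨k, hk⟩ := hc a rfl (fun n => ⟨v n, rfl⟩)
  refine ⟨k, ?_⟩
  rw [← hat k, hk]
  rfl

open Classical in
lemma single_mem_carrier {M : GMIdeal T} {p : I × I} {c : T.A p.1 p.2}
    (hc : c ∈ M.B p.1 p.2) :
    (DFinsupp.single p c : GMRing T) ∈ M.carrier := by
  intro q
  by_cases h : p = q
  · subst h; rw [DFinsupp.single_eq_same]; exact hc
  · rw [DFinsupp.single_eq_of_ne (Ne.symm h)]; exact (M.B q.1 q.2).zero_mem

end Zhang

end ZhangGM2

section ZhangMain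

variable {I : Type u} (S : GammaSystem.{u, v} I)

namespace Zhang

instance : Preorder (GMIdeal S) where
  le B C := ∀ i j : I, B.B i j ≤ C.B i j
  le_refl B := fun _ _ => le_refl _
  le_trans A B C hab hbc := fun i j => le_trans (hab i j) (hbc i j)

/-- The zero g.m. ideal. -/
def gmBot : GMIdeal S where
  B _ _ := ⊥
  mul_mem_right := by
    intro i j k x z hx
    rw [AddSubgroup.mem_bot] at hx ⊢
    rw [hx, S.zero_mul']
  mul_mem_left := by
    intro i j k x z hz
    rw [AddSubgroup.mem_bot] at hz ⊢
    rw [hz, S.mul_zero']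

open Classical in
/-- `x ∈ A_{ij}` is `m`-nilpotent iff the corresponding "matrix unit" lies in
the Baer radical of the ring `A`. -/
lemma mnilpotent_iff_single_mem_baer {i j : I} (c : S.A i j) :
    S.MNilpotent i j c ↔
      (DFinsupp.single ((i, j) : I × I) c : GMRing S) ∈ baerRadical (GMRing S) :=
  ⟨fun h _P hP => Zhang.mem_of_isMNilpotent ((isMNilpotent_single_iff S c).mpr h) hP,
   fun h => by
    have := mnilpotent_component S (Zhang.isMNilpotent_of_mem h) i j
    rwa [DFinsupp.single_eq_same] at this⟩

open Classical in
/-- componentwise `m`-nilpotent implies in the Baer radical of the ring. -/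
theorem mem_baer_of_components {x : GMRing S}
    (hx : ∀ p : I × I, S.MNilpotent p.1 p.2 (x p)) :
    x ∈ baerRadical (GMRing S) := by
  intro P hP
  revert hx
  induction x using DFinsupp.induction with
  | h0 => intro _; exact P.zero_mem
  | ha p c f hf hc ih =>
      intro hx
      have hc' : S.MNilpotent p.1 p.2 c := by
        have := hx p
        rwa [DFinsupp.add_apply, DFinsupp.single_eq_same, hf, add_zero] at this
      have hf' : ∀ q : I × I, S.MNilpotent q.1 q.2 (f q) := by
        intro q
        by_cases h : q = p
        · subst h; rw [hf]; exact mnilpotent_zero S _ _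
        · have := hx q
          rwa [DFinsupp.add_apply, DFinsupp.single_eq_of_ne h,
            zero_add] at this
      refine P.add_mem ?_ (ih hf')
      obtain ⟨i, j⟩ := p
      exact (mnilpotent_iff_single_mem_baer S c).mp hc' P hP

open Classical in
/-- The Baer radical g.m. ideal: componentwise the `m`-nilpotent elements. -/
def baerGMIdeal : GMIdeal S where
  B i j :=
    { carrier := {c | S.MNilpotent i j c}
      zero_mem' := mnilpotent_zero S i j
      add_mem' := by
        intro c d hc hd
        rw [Set.mem_setOf_eq, mnilpotent_iff_single_mem_baer] at hc hd ⊢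
        rw [DFinsupp.single_add]
        exact fun P hP => P.add_mem (hc P hP) (hd P hP)
      neg_mem' := by
        intro c hc
        rw [Set.mem_setOf_eq, mnilpotent_iff_single_mem_baer] at hc ⊢
        rw [DFinsupp.single_neg]
        exact fun P hP => P.neg_mem (hc P hP) }
  mul_mem_right := by
    intro i j k c z hc
    change S.MNilpotent i j c at hc; change S.MNilpotent i k (S.mul c z)
    rw [mnilpotent_iff_single_mem_baer] at hc ⊢
    rw [← single_mul_single S c z]
    exact fun P hP => P.mul_mem_right _ _ (hc P hP)
  mul_mem_left := by
    intro i j k c z hz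
    change S.MNilpotent j k z at hz; change S.MNilpotent i k (S.mul c z)
    rw [mnilpotent_iff_single_mem_baer] at hz ⊢
    rw [← single_mul_single S c z]
    exact fun P hP => P.mul_mem_left _ _ (hz P hP)

/-- Componentwise characterization of the ring-theoretic Baer radical. -/
theorem mem_baer_iff_components (x : GMRing S) :
    x ∈ baerRadical (GMRing S) ↔ ∀ i j : I, x (i, j) ∈ S.componentBaer i j := by
  constructor
  · intro hx i j
    exact mnilpotent_component S (Zhang.isMNilpotent_of_mem hx) i j
  · intro hx
    refine mem_baer_of_components S (fun p => ?_)
    obtain ⟨i, j⟩ := p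
    exact hx i j

theorem baerGMIdeal_carrier :
    (baerGMIdeal S).carrier = baerRadical (GMRing S) := by
  ext x
  rw [mem_baer_iff_components]
  constructor
  · intro h i j; exact h (i, j)
  · intro h p
    obtain ⟨i, j⟩ := p
    exact h i j

theorem baerGMIdeal_isBaer : (baerGMIdeal S).IsBaerGMIdeal := by
  intro x hx a hmem ha0 hstep
  have hxb : x ∈ baerRadical (GMRing S) := by
    rw [← baerGMIdeal_carrier S]; exact hx
  exact Zhang.isMNilpotent_of_mem hxb a ha0
    (fun n => (hstep n).imp (fun u hu => hu.2))

open Classical in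
theorem baerGMIdeal_largest (M : GMIdeal S) (hM : M.IsBaerGMIdeal) (i j : I) :
    M.B i j ≤ (baerGMIdeal S).B i j := by
  intro c hc
  show S.MNilpotent i j c
  intro b hb0 hbstep
  choose u hu using hbstep
  have hbmem : ∀ n, b n ∈ M.B i j := by
    intro n
    induction n with
    | zero => rw [hb0]; exact hc
    | succ n ih => rw [hu n]; exact M.mul_mem_right _ _ (M.mul_mem_right _ _ ih)
  let e : ℕ → S.A j i := fun n =>
    S.mul (S.mul (S.mul (S.mul (u (2 * n)) (b (2 * n))) (u (2 * n + 1))) (b (2 * n)))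
      (u (2 * n))
  let d : ℕ → GMRing S := fun n => DFinsupp.single ((i, j) : I × I) (b (2 * n))
  have hW : ∀ n, (DFinsupp.single ((j, i) : I × I) (e n) : GMRing S) ∈ M.carrier := by
    intro n
    refine single_mem_carrier S ?_
    exact M.mul_mem_right _ _ (M.mul_mem_right _ _ (M.mul_mem_right _ _
      (M.mul_mem_left _ _ (hbmem (2 * n)))))
  have hd : ∀ n, d n ∈ M.carrier := fun n => single_mem_carrier S (hbmem (2 * n))
  have hstep : ∀ n, d (n + 1)
      = d n * (DFinsupp.single ((j, i) : I × I) (e n) : GMRing S) * d n := by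
    intro n
    show (DFinsupp.single ((i, j) : I × I) (b (2 * (n + 1))) : GMRing S) = _
    rw [single_mul_single, single_mul_single]
    have h2 : 2 * (n + 1) = (2 * n + 1) + 1 := by ring
    rw [h2, hu (2 * n + 1), hu (2 * n)]
    congr 1
    simp only [S.mul_assoc, e]
  have hmn := hM (DFinsupp.single ((i, j) : I × I) c) (single_mem_carrier S hc) d hd
    (by show (DFinsupp.single ((i, j) : I × I) (b (2 * 0)) : GMRing S) = _; rw [hb0])
    (fun n => ⟨DFinsupp.single ((j, i) : I × I) (e n), hW n, hstep n⟩)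
  obtain ⟨k, hk⟩ := hmn
  refine ⟨2 * k, ?_⟩
  have : (DFinsupp.single ((i, j) : I × I) (b (2 * k)) : GMRing S) = 0 := hk
  rwa [DFinsupp.single_eq_zero] at this

end Zhang

end ZhangMain


section ZhangBar

variable {I : Type u} (S : GammaSystem.{u, v} I)

namespace Zhang

open Classical in
/-- The g.m. ideal of `S` formed by the components of (representatives of) a
two-sided ideal of the quotient g.m. ring. -/
def componentIdeal (B : GMIdeal S) (W : TwoSidedIdeal (GMRing B.quotSystem)) :
    GMIdeal S where
  B i j :=
    { carrier := {v | ∃ y ∈ W, y (i, j) = QuotientAddGroup.mk v}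
      zero_mem' := ⟨0, W.zero_mem, by rw [QuotientAddGroup.mk_zero]; rfl⟩
      add_mem' := by
        rintro x y ⟨y1, h1, e1⟩ ⟨y2, h2, e2⟩
        exact ⟨y1 + y2, W.add_mem h1 h2,
          by rw [DFinsupp.add_apply, e1, e2]; exact (QuotientAddGroup.mk_add _ _ _).symm⟩
      neg_mem' := by
        rintro x ⟨y1, h1, e1⟩
        exact ⟨-y1, W.neg_mem h1,
          by rw [DFinsupp.neg_apply, e1]; exact (QuotientAddGroup.mk_neg _ _).symm⟩ }
  mul_mem_right := by
    intro i j k v z hv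
    obtain ⟨y, hy, he⟩ := hv
    refine ⟨y * (DFinsupp.single ((j, k) : I × I) (QuotientAddGroup.mk z) :
      GMRing B.quotSystem), W.mul_mem_right _ _ hy, ?_⟩
    erw [mul_single_apply B.quotSystem, he, quot_mul_mk]
  mul_mem_left := by
    intro i j k v z hz
    obtain ⟨y, hy, he⟩ := hz
    refine ⟨(DFinsupp.single ((i, j) : I × I) (QuotientAddGroup.mk v) :
      GMRing B.quotSystem) * y, W.mul_mem_left _ _ hy, ?_⟩
    erw [single_mul_apply B.quotSystem, he, quot_mul_mk]

theorem le_componentIdeal (B : GMIdeal S) (W : TwoSidedIdeal (GMRing B.quotSystem)) :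
    B ≤ componentIdeal S B W := by
  intro i j v hv
  refine ⟨0, W.zero_mem, ?_⟩
  have : (QuotientAddGroup.mk v : S.A i j ⧸ B.B i j) = 0 :=
    (QuotientAddGroup.eq_zero_iff v).mpr hv
  rw [this]
  rfl

/-- Union of a nonempty chain of g.m. ideals. -/
def chainUnion (c : Set (GMIdeal S)) (hchain : IsChain (· ≤ ·) c)
    (B₀ : GMIdeal S) (hB₀ : B₀ ∈ c) : GMIdeal S where
  B i j :=
    { carrier := {v | ∃ D ∈ c, v ∈ D.B i j}
      zero_mem' := ⟨B₀, hB₀, (B₀.B i j).zero_mem⟩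
      add_mem' := by
        rintro x y ⟨D1, hD1, hx⟩ ⟨D2, hD2, hy⟩
        rcases hchain.total hD1 hD2 with h | h
        · exact ⟨D2, hD2, (D2.B i j).add_mem (h i j hx) hy⟩
        · exact ⟨D1, hD1, (D1.B i j).add_mem hx (h i j hy)⟩
      neg_mem' := by
        rintro x ⟨D, hD, hx⟩
        exact ⟨D, hD, (D.B i j).neg_mem hx⟩ }
  mul_mem_right := by
    rintro i j k x z ⟨D, hD, hx⟩
    exact ⟨D, hD, D.mul_mem_right x z hx⟩
  mul_mem_left := by
    rintro i j k x z ⟨D, hD, hz⟩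
    exact ⟨D, hD, D.mul_mem_left x z hz⟩

open Classical in
/-- `gmBarBaer S ⊆ baerRadical`. -/
theorem gmBar_subset_baer : gmBarBaer S ⊆ baerRadical (GMRing S) := by
  intro x hx
  apply mem_baer_of_components S
  intro p
  by_contra hcon
  obtain ⟨i0, j0⟩ := p
  unfold GammaSystem.MNilpotent at hcon
  push_neg at hcon
  obtain ⟨b, hb0, hbstep, hbne⟩ := hcon
  choose u hu using hbstep
  set 𝒮 : Set (GMIdeal S) := {B | ∀ n, b n ∉ B.B i0 j0} with h𝒮
  have hzorn : ∃ m, Maximal (· ∈ 𝒮) m := by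
    apply zorn_le₀
    intro c hc hchain
    by_cases hne : c.Nonempty
    · obtain ⟨B₀, hB₀⟩ := hne
      refine ⟨chainUnion S c hchain B₀ hB₀, ?_, ?_⟩
      · rintro n ⟨D, hD, hmem⟩
        exact hc hD n hmem
      · intro D hD i j v hv
        exact ⟨D, hD, hv⟩
    · rw [Set.not_nonempty_iff_eq_empty] at hne
      refine ⟨gmBot S, fun n hn => hbne n ?_, by simp [hne]⟩
      rwa [show (gmBot S).B i0 j0 = ⊥ from rfl, AddSubgroup.mem_bot] at hn
  obtain ⟨B, hBmax⟩ := hzorn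
  have hB𝒮 : ∀ n, b n ∉ B.B i0 j0 := hBmax.1
  have hmono : ∀ (D : GMIdeal S) (m), b m ∈ D.B i0 j0 →
      ∀ k, m ≤ k → b k ∈ D.B i0 j0 := by
    intro D m hm k hk
    induction k, hk using Nat.le_induction with
    | base => exact hm
    | succ k hk ih =>
        rw [hu k]
        exact D.mul_mem_right _ _ (D.mul_mem_right _ _ ih)
  have hprime : IsPrimeRing (GMRing B.quotSystem) := by
    intro U V hUV
    by_contra hcon'
    push_neg at hcon'
    obtain ⟨hU, hV⟩ := hcon'
    have key : ∀ W : TwoSidedIdeal (GMRing B.quotSystem), W ≠ ⊥ →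
        ∃ m, b m ∈ (componentIdeal S B W).B i0 j0 := by
      intro W hW
      by_contra h'
      push_neg at h'
      have hle := hBmax.2 (fun n => h' n) (le_componentIdeal S B W)
      have hex : ∃ y ∈ W, y ≠ 0 := by
        by_contra h''
        push_neg at h''
        exact hW (le_antisymm
          (fun y hy => (TwoSidedIdeal.mem_bot (R := GMRing B.quotSystem)).mpr (h'' y hy)) bot_le)
      obtain ⟨y, hyW, hy0⟩ := hex
      have hq : ∃ q : I × I, y q ≠ 0 := by
        by_contra h''
        push_neg at h''
        exact hy0 (DFinsupp.ext h'')
      obtain ⟨⟨q1, q2⟩, hq⟩ := hq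
      obtain ⟨v, hvmk⟩ := QuotientAddGroup.mk_surjective (y (q1, q2))
      have hvC : v ∈ (componentIdeal S B W).B q1 q2 := ⟨y, hyW, hvmk.symm⟩
      have hvB : v ∈ B.B q1 q2 := hle q1 q2 hvC
      exact hq (by rw [← hvmk]; exact (QuotientAddGroup.eq_zero_iff v).mpr hvB)
    obtain ⟨m, hm⟩ := key U hU
    obtain ⟨n, hn⟩ := key V hV
    obtain ⟨y, hyU, hye⟩ := hmono _ m hm (max m n) (le_max_left m n)
    obtain ⟨z, hzV, hze⟩ := hmono _ n hn (max m n) (le_max_right m n)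
    have hyz : y * (DFinsupp.single ((j0, i0) : I × I)
        (QuotientAddGroup.mk (u (max m n))) : GMRing B.quotSystem) * z = 0 :=
      hUV _ (U.mul_mem_right _ _ hyU) z hzV
    have hcomp : (y * (DFinsupp.single ((j0, i0) : I × I)
        (QuotientAddGroup.mk (u (max m n))) : GMRing B.quotSystem) * z) (i0, j0)
          = QuotientAddGroup.mk (b (max m n + 1)) := by
      erw [triple_apply B.quotSystem, hye, hze, quot_mul_mk,
        ← hu (max m n)]
    rw [hyz] at hcomp
    have h0' : (QuotientAddGroup.mk (b (max m n + 1)) :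
        S.A i0 j0 ⧸ B.B i0 j0) = 0 := by
      rw [← hcomp]; rfl
    exact hB𝒮 (max m n + 1) ((QuotientAddGroup.eq_zero_iff _).mp h0')
  have := hx B hprime (i0, j0)
  rw [← hb0] at this
  exact hB𝒮 0 this

open Classical in
/-- `baerRadical ⊆ gmBarBaer S`. -/
theorem baer_subset_gmBar : baerRadical (GMRing S) ⊆ gmBarBaer S := by
  intro x hx B hB p
  obtain ⟨i, j⟩ := p
  have hc : S.MNilpotent i j (x (i, j)) :=
    mnilpotent_component S (Zhang.isMNilpotent_of_mem hx) i j
  have hq : B.quotSystem.MNilpotent i j (QuotientAddGroup.mk (x (i, j))) :=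
    mnilpotent_quot S B hc
  have h1 : IsMNilpotent (DFinsupp.single ((i, j) : I × I)
      (QuotientAddGroup.mk (x (i, j))) : GMRing B.quotSystem) :=
    (isMNilpotent_single_iff B.quotSystem _).mpr hq
  have h2 := Zhang.mem_of_isMNilpotent h1 (Zhang.bot_isPrimeIdeal hB)
  erw [TwoSidedIdeal.mem_bot, DFinsupp.single_eq_zero] at h2
  exact (QuotientAddGroup.eq_zero_iff _).mp h2

end Zhang

end ZhangBar

/-- **Theorem 3.7 (with the componentwise description).**
For the generalized matrix ring `A` of a `Γ_I`-system:
the largest g.m.ideal `N` all of whose elements are `m`-nilpotent in the ring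
`N` (i.e. `g.m.r_b(A)`) exists and coincides, as a subset of `A`, with the
Baer radical `r_b(A)` of the ring `A`; the componentwise intersection
`\bar r_b(A)` of all g.m.ideals `B` with `A//B` prime also equals `r_b(A)`;
and `x = (x_{ij}) ∈ r_b(A)` iff `x_{ij} ∈ r_b(A_{ij})` for all `i, j ∈ I`. -/
theorem baerRadical_of_gmRing {I : Type u} (S : GammaSystem.{u, v} I) :
    (∃ N : GMIdeal S, N.IsBaerGMIdeal ∧
        (∀ M : GMIdeal S, M.IsBaerGMIdeal → ∀ i j : I, M.B i j ≤ N.B i j) ∧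
        N.carrier = baerRadical (GMRing S)) ∧
    gmBarBaer S = baerRadical (GMRing S) ∧
    ∀ x : GMRing S, x ∈ baerRadical (GMRing S) ↔
      ∀ i j : I, x (i, j) ∈ S.componentBaer i j := by
  refine ⟨⟨Zhang.baerGMIdeal S, Zhang.baerGMIdeal_isBaer S,
    Zhang.baerGMIdeal_largest S, Zhang.baerGMIdeal_carrier S⟩,
    Set.Subset.antisymm (Zhang.gmBar_subset_baer S) (Zhang.baer_subset_gmBar S),
    fun x => Zhang.mem_baer_iff_components S x⟩
end

section
/- Let A = Σ{A_{ij} | i,j ∈ I} be the generalized matrix ring of a Γ_I-system. If N is a g.m.ideal of A such that every element of the ring N is m-nilpotent in N, then N_{ij} ⊆ r_b(A_{ij}) for all i,j ∈ I; consequently g.m.r_b(A) ⊆ Σ{r_b(A_{ij}) | i,j ∈ I}. -/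
/-!
Generalized matrix rings (g.m.rings) of a `Γ_I`-system, their g.m.ideals,
g.m.homomorphisms, quotients, and the general theory of radicals,
following Zhang, "The Baer radical of generalized matrix rings".
-/

universe u v w

set_option autoImplicit false
set_option maxHeartbeats 1000000

variable {I : Type u}

/-- **Theorem 3.6.** If `N` is a g.m.ideal of `A` such that every element of
the ring `N` is `m`-nilpotent in `N`, then `N_{ij} ⊆ r_b(A_{ij})` for all
`i, j ∈ I`; consequently `g.m.r_b(A) ⊆ Σ{r_b(A_{ij}) | i,j ∈ I}`. -/
theorem gmBaerIdeal_le_componentBaer {I : Type u} (S : GammaSystem.{u, v} I)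
    (N : GMIdeal S) (hN : N.IsBaerGMIdeal) :
    ∀ i j : I, (N.B i j : Set (S.A i j)) ⊆ S.componentBaer i j := by
  classical
  intro i j x hx
  intro a ha0 hrec
  choose u hu using hrec
  have haN : ∀ n, a n ∈ N.B i j := by
    intro n
    induction n with
    | zero => rw [ha0]; exact hx
    | succ n ih => rw [hu n]; exact N.mul_mem_right _ _ (N.mul_mem_right _ _ ih)
  -- multipliers for the even subsequence, lying in N
  let v : ℕ → S.A j i := fun n =>
    S.mul (S.mul (S.mul (S.mul (u (2*n)) (a (2*n))) (u (2*n+1))) (a (2*n))) (u (2*n))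
  have hvN : ∀ n, v n ∈ N.B j i := fun n =>
    N.mul_mem_right _ _ (N.mul_mem_right _ _ (N.mul_mem_right _ _
      (N.mul_mem_left _ _ (haN _))))
  have hstep : ∀ n, a (2*(n+1)) = S.mul (S.mul (a (2*n)) (v n)) (a (2*n)) := by
    intro n
    have e : 2*(n+1) = (2*n+1)+1 := by ring
    rw [e, hu (2*n+1), hu (2*n)]
    show _ = S.mul (S.mul (a (2*n)) (S.mul (S.mul (S.mul (S.mul (u (2*n)) (a (2*n)))
      (u (2*n+1))) (a (2*n))) (u (2*n)))) (a (2*n))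
    simp only [S.mul_assoc]
  have singleMem : ∀ (p : I × I) (z : S.A p.1 p.2), z ∈ N.B p.1 p.2 →
      DFinsupp.single p z ∈ N.carrier := by
    intro p z hz q
    by_cases h : p = q
    · subst h; simpa [DFinsupp.single_eq_same] using hz
    · rw [DFinsupp.single_eq_of_ne (Ne.symm h)]; exact (N.B q.1 q.2).zero_mem
  have prod3 : ∀ (c d : S.A i j) (w : S.A j i),
      ((DFinsupp.single ((i,j) : I × I) c : GMRing S) *
        (DFinsupp.single ((j,i) : I × I) w : GMRing S) *
        (DFinsupp.single ((i,j) : I × I) d : GMRing S) : GMRing S)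
        = DFinsupp.single ((i,j) : I × I) (S.mul (S.mul c w) d) := by
    intro c d w
    show S.gmul (S.gmul (DFinsupp.single ((i,j) : I × I) c)
      (DFinsupp.single ((j,i) : I × I) w)) (DFinsupp.single ((i,j) : I × I) d) = _
    rw [S.gmul_single_single (i,j) (j,i) c w, dif_pos rfl]
    rw [show (cast (congrArg (fun t => S.A t i) (Eq.symm rfl)) w) = w from rfl]
    rw [S.gmul_single_single (i,i) (i,j) (S.mul c w) d, dif_pos rfl]
    rfl
  let b : ℕ → GMRing S := fun n => DFinsupp.single ((i,j) : I × I) (a (2*n))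
  have hb : ∀ n, b n = (DFinsupp.single ((i,j) : I × I) (a (2*n)) : GMRing S) :=
    fun _ => rfl
  have hbmem : ∀ n, b n ∈ N.carrier := fun n => singleMem _ _ (haN (2*n))
  have hb0 : b 0 = DFinsupp.single ((i,j) : I × I) x := by
    rw [hb 0]
    norm_num [ha0]
  have hres := hN (DFinsupp.single ((i,j) : I × I) x) (singleMem _ _ hx) b hbmem hb0 ?_
  · obtain ⟨k, hk⟩ := hres
    refine ⟨2*k, ?_⟩
    have hk' : (DFinsupp.single ((i,j) : I × I) (a (2*k)) : GMRing S) = 0 := by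
      rw [← hb k]; exact hk
    exact (DFinsupp.single_eq_zero (i := ((i,j) : I × I))).mp hk'
  · intro n
    refine ⟨DFinsupp.single ((j,i) : I × I) (v n), singleMem _ _ (hvN n), ?_⟩
    rw [hb (n+1), hb n, prod3, hstep n]
end
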